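/- Let m ≥ 1 be an integer and 0 < a < 1 be such that m − Σ_{k=1}^{m} a^k > β, where β = (4π²)^{−1} e^{2π} Φ(0) − 1 > 0 and Φ(0) = Σ_{n=1}^{∞} (2π² n⁴ − 3π n²) e^{−π n²}. Set c = β/(m − Σ_{k=1}^{m} a^k). Then 0 < c < 1, and the entire function F(z) = cos(mz) + c Σ_{k=0}^{m−1} (1 − a^{k+1}) cos(kz), where cos denotes the complex cosine, has only real zeros. -/

import Mathlib

open Real

/-- `Φ(0) = ∑_{n=1}^{∞} (2π² n⁴ − 3π n²) e^{−π n²}`. -/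
noncomputable def Phi0 : ℝ :=
  ∑' n : ℕ, (2 * π ^ 2 * (n + 1 : ℝ) ^ 4 - 3 * π * (n + 1 : ℝ) ^ 2) * exp (-π * (n + 1 : ℝ) ^ 2)

/-- `β = (4π²)⁻¹ e^{2π} Φ(0) − 1`. -/
noncomputable def betaConst : ℝ := (4 * π ^ 2)⁻¹ * exp (2 * π) * Phi0 - 1

/-- Abel/telescoping summation identity. -/
lemma tele_sum (b s : ℕ → ℝ) (m : ℕ) :
    ∑ k ∈ Finset.range (m+1), b k * (s (k+1) - s k)
      = b m * s (m+1) - b 0 * s 0 - ∑ k ∈ Finset.range m, (b (k+1) - b k) * s (k+1) := by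
  induction m with
  | zero => simp; ring
  | succ n ih =>
      rw [Finset.sum_range_succ, ih, Finset.sum_range_succ]
      ring

lemma Phi0_term_nonneg (n : ℕ) :
    0 ≤ (2 * π ^ 2 * (n + 1 : ℝ) ^ 4 - 3 * π * (n + 1 : ℝ) ^ 2) * exp (-π * (n + 1 : ℝ) ^ 2) := by
  have h1 : (1:ℝ) ≤ (n + 1 : ℝ) := by have := Nat.cast_nonneg (α:=ℝ) n; linarith
  have h2 : (1:ℝ) ≤ (n + 1 : ℝ) ^ 2 := one_le_pow₀ h1
  have hπ : (3:ℝ) < π := by nlinarith [pi_gt_d6]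
  have : 3 * π * (n + 1 : ℝ) ^ 2 ≤ 2 * π ^ 2 * (n + 1 : ℝ) ^ 4 := by
    have e4 : (n + 1 : ℝ) ^ 4 = ((n + 1 : ℝ) ^ 2) ^ 2 := by ring
    rw [e4]
    have hp : (0:ℝ) < π * (2 * π - 3) := mul_pos pi_pos (by linarith)
    nlinarith [sq_nonneg ((n + 1 : ℝ) ^ 2 - 1)]
  have := exp_pos (-π * (n + 1 : ℝ) ^ 2)
  nlinarith

lemma Phi0_summable :
    Summable (fun n : ℕ =>
      (2 * π ^ 2 * (n + 1 : ℝ) ^ 4 - 3 * π * (n + 1 : ℝ) ^ 2) * exp (-π * (n + 1 : ℝ) ^ 2)) := by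
  have hr : ‖exp (-π)‖ < 1 := by
    rw [Real.norm_eq_abs, abs_of_pos (exp_pos _)]
    exact exp_lt_one_iff.mpr (neg_neg_iff_pos.mpr pi_pos)
  have h0 : Summable (fun n : ℕ => (n:ℝ) ^ 4 * exp (-π) ^ n) :=
    summable_pow_mul_geometric_of_norm_lt_one 4 hr
  have h1 : Summable (fun n : ℕ => ((n:ℝ)+1) ^ 4 * exp (-π) ^ (n+1)) := by
    have := (summable_nat_add_iff (f := fun n : ℕ => (n:ℝ) ^ 4 * exp (-π) ^ n) 1).mpr h0
    convert this using 2 with n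
    case e'_5 => push_cast; ring
    case e'_3 => rfl
  refine Summable.of_nonneg_of_le (fun n => Phi0_term_nonneg n) (fun n => ?_) (h1.mul_left (2 * π ^ 2))
  have h1n : (1:ℝ) ≤ (n + 1 : ℝ) := by have := Nat.cast_nonneg (α:=ℝ) n; linarith
  have hle : -π * (n + 1 : ℝ) ^ 2 ≤ -π * (n + 1 : ℝ) := by
    have : (n + 1 : ℝ) ≤ (n + 1 : ℝ)^2 := le_self_pow₀ h1n (by norm_num) |>.trans_eq rfl
    nlinarith [pi_pos]
  have hexp : exp (-π * (n + 1 : ℝ) ^ 2) ≤ exp (-π) ^ (n+1) := by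
    rw [← Real.exp_nat_mul]
    apply exp_le_exp.mpr
    calc -π * (n + 1 : ℝ) ^ 2 ≤ -π * (n + 1 : ℝ) := hle
      _ = (n+1 : ℕ) * (-π) := by push_cast; ring
  have hco : (2 * π ^ 2 * (n + 1 : ℝ) ^ 4 - 3 * π * (n + 1 : ℝ) ^ 2) ≤ 2 * π ^ 2 * (n + 1 : ℝ) ^ 4 := by
    nlinarith [pi_pos, sq_nonneg ((n:ℝ)+1)]
  calc (2 * π ^ 2 * (n + 1 : ℝ) ^ 4 - 3 * π * (n + 1 : ℝ) ^ 2) * exp (-π * (n + 1 : ℝ) ^ 2)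
      ≤ 2 * π ^ 2 * (n + 1 : ℝ) ^ 4 * exp (-π * (n + 1 : ℝ) ^ 2) := by
        apply mul_le_mul_of_nonneg_right hco (exp_pos _).le
    _ ≤ 2 * π ^ 2 * (n + 1 : ℝ) ^ 4 * (exp (-π) ^ (n+1)) := by
        apply mul_le_mul_of_nonneg_left hexp (by positivity)
    _ = 2 * π ^ 2 * (((n:ℝ)+1) ^ 4 * exp (-π) ^ (n+1)) := by ring

lemma exp_pi_gt : (20:ℝ) < exp π := by
  have h3 : (3:ℝ) ≤ π := by nlinarith [pi_gt_d6]
  have h1 : ((2.7182818283:ℝ))^3 < (exp 1)^3 :=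
    pow_lt_pow_left₀ exp_one_gt_d9 (by norm_num) (by norm_num)
  have he3 : (exp 1)^3 = exp 3 := by rw [← Real.exp_nat_mul]; norm_num
  have : (20:ℝ) < exp 3 := by rw [← he3]; nlinarith
  calc (20:ℝ) < exp 3 := this
    _ ≤ exp π := exp_le_exp.mpr h3

lemma betaConst_pos : 0 < betaConst := by
  rw [betaConst]
  have h0' : (2 * π ^ 2 - 3 * π) * exp (-π) ≤ Phi0 := by
    rw [Phi0]
    simpa using Phi0_summable.le_tsum 0 (fun j _ => Phi0_term_nonneg j)
  have hπ : (3.141592:ℝ) < π := pi_gt_d6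
  have hπ' : π < 3.15 := by nlinarith [pi_lt_d2]
  have he : exp (2*π) * exp (-π) = exp π := by rw [← exp_add]; ring_nf
  have hA : (10:ℝ) < 2 * π ^ 2 - 3 * π := by nlinarith
  have hkey : 4 * π ^ 2 < exp π * (2 * π ^ 2 - 3 * π) := by
    have := mul_lt_mul'' exp_pi_gt hA (by norm_num) (by norm_num)
    nlinarith
  have hchain : (4 * π ^ 2)⁻¹ * exp (2 * π) * ((2 * π ^ 2 - 3 * π) * exp (-π))
      ≤ (4 * π ^ 2)⁻¹ * exp (2 * π) * Phi0 := by
    apply mul_le_mul_of_nonneg_left h0' (by positivity)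
  have heq : (4 * π ^ 2)⁻¹ * exp (2 * π) * ((2 * π ^ 2 - 3 * π) * exp (-π))
      = (exp π * (2 * π ^ 2 - 3 * π)) / (4 * π ^ 2) := by rw [← he]; ring
  have hfin : (1:ℝ) < (exp π * (2 * π ^ 2 - 3 * π)) / (4 * π ^ 2) :=
    (one_lt_div (by positivity)).mpr hkey
  rw [heq] at hchain
  linarith

/-- coefficient sequence: `B k = c(1-a^{k+1})` for `k ≠ m`, `B m = 1`. -/
noncomputable def Bco (c a : ℝ) (m k : ℕ) : ℝ := if k = m then 1 else c * (1 - a ^ (k + 1))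

/-- the real trigonometric polynomial. -/
noncomputable def gR (c a : ℝ) (m : ℕ) (θ : ℝ) : ℝ :=
  ∑ k ∈ Finset.range (m+1), Bco c a m k * Real.cos (k * θ)

/-- the associated complex polynomial. -/
noncomputable def Qp (c a : ℝ) (m : ℕ) : Polynomial ℂ :=
  Polynomial.X ^ (2*m) + 1 + ∑ k ∈ Finset.range m,
    Polynomial.C ((c * (1 - a ^ (k+1)) : ℝ) : ℂ) * (Polynomial.X ^ (m+k) + Polynomial.X ^ (m-k))

open Polynomial in
lemma Qp_eval (c a : ℝ) (m : ℕ) (z : ℂ) :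
    (Qp c a m).eval (Complex.exp (z * Complex.I)) =
      2 * Complex.exp ((m:ℂ) * z * Complex.I) *
        (Complex.cos ((m:ℂ) * z) +
          (c : ℂ) * ∑ k ∈ Finset.range m, ((1 - a ^ (k+1) : ℝ) : ℂ) * Complex.cos ((k:ℂ) * z)) := by
  have hw : ∀ n : ℕ, Complex.exp (z * Complex.I) ^ n = Complex.exp ((n:ℂ) * z * Complex.I) := by
    intro n
    rw [← Complex.exp_nat_mul]
    ring_nf
  have hcos : ∀ w : ℂ, Complex.cos w
      = (Complex.exp (w * Complex.I) + Complex.exp (-w * Complex.I)) / 2 := by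
    intro w
    rw [Complex.cos]
  simp only [Qp, eval_add, eval_pow, eval_X, eval_one, eval_finset_sum, eval_mul, eval_C]
  rw [mul_add, Finset.mul_sum]
  have hterm : ∀ k ∈ Finset.range m,
      ((c * (1 - a ^ (k+1)) : ℝ) : ℂ) *
        (Complex.exp (z * Complex.I) ^ (m+k) + Complex.exp (z * Complex.I) ^ (m-k))
      = 2 * Complex.exp ((m:ℂ) * z * Complex.I) *
          ((c:ℂ) * (((1 - a ^ (k+1) : ℝ) : ℂ) * Complex.cos ((k:ℂ) * z))) := by
    intro k hk
    have hkm : k ≤ m := (Finset.mem_range.mp hk).le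
    rw [hw, hw, hcos ((k:ℂ)*z)]
    rw [Nat.cast_sub hkm]
    push_cast
    rw [show ((m:ℂ)+k) * z * Complex.I = (m:ℂ)*z*Complex.I + (k*z*Complex.I) by ring,
        show ((m:ℂ)-k) * z * Complex.I = (m:ℂ)*z*Complex.I + (-(k*z)*Complex.I) by ring,
        Complex.exp_add, Complex.exp_add]
    ring
  rw [Finset.sum_congr rfl hterm]
  have hmain : Complex.exp (z * Complex.I) ^ (2*m) + 1
      = 2 * Complex.exp ((m:ℂ) * z * Complex.I) * Complex.cos ((m:ℂ)*z) := by
    rw [hw, hcos ((m:ℂ)*z)]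
    rw [show ((2*m:ℕ):ℂ) * z * Complex.I = (m:ℂ)*z*Complex.I + ((m:ℂ)*z*Complex.I) by push_cast; ring,
        show (-((m:ℂ)*z)) * Complex.I = -((m:ℂ)*z*Complex.I) by ring,
        Complex.exp_add, Complex.exp_neg]
    have hne := Complex.exp_ne_zero ((m:ℂ)*z*Complex.I)
    field_simp
  rw [← hmain, Finset.mul_sum]

open Polynomial in
lemma Qp_natDegree (c a : ℝ) (m : ℕ) (hm : 1 ≤ m) : (Qp c a m).natDegree = 2*m := by
  have hR : (1 + ∑ k ∈ Finset.range m,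
      Polynomial.C ((c * (1 - a ^ (k+1)) : ℝ) : ℂ)
        * (Polynomial.X ^ (m+k) + Polynomial.X ^ (m-k)) : Polynomial ℂ).natDegree < 2*m := by
    apply Nat.lt_of_le_of_lt (Polynomial.natDegree_add_le _ _)
    have h2 : (∑ k ∈ Finset.range m,
        Polynomial.C ((c * (1 - a ^ (k+1)) : ℝ) : ℂ)
          * (Polynomial.X ^ (m+k) + Polynomial.X ^ (m-k)) : Polynomial ℂ).natDegree ≤ 2*m - 1 := by
      apply Polynomial.natDegree_sum_le_of_forall_le
      intro k hk
      have hkm : k < m := Finset.mem_range.mp hk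
      apply le_trans (Polynomial.natDegree_C_mul_le _ _)
      apply le_trans (Polynomial.natDegree_add_le _ _)
      rw [natDegree_X_pow, natDegree_X_pow]
      omega
    have h1 : (1 : Polynomial ℂ).natDegree = 0 := natDegree_one
    omega
  rw [Qp, add_assoc]
  rw [Polynomial.natDegree_add_eq_left_of_natDegree_lt]
  · exact natDegree_X_pow _
  · rwa [natDegree_X_pow]

lemma Qp_ne_zero (c a : ℝ) (m : ℕ) (hm : 1 ≤ m) : Qp c a m ≠ 0 := by
  intro h
  have h2 := Qp_natDegree c a m hm
  rw [h, Polynomial.natDegree_zero] at h2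
  omega

lemma gR_cast (c a : ℝ) (m : ℕ) (hm : 1 ≤ m) (t : ℝ) :
    ((gR c a m t : ℝ) : ℂ) =
      Complex.cos ((m:ℂ) * t) +
        (c : ℂ) * ∑ k ∈ Finset.range m, ((1 - a ^ (k+1) : ℝ) : ℂ) * Complex.cos ((k:ℂ) * t) := by
  rw [gR, Finset.sum_range_succ, Bco, if_pos rfl, one_mul]
  push_cast
  rw [add_comm, Finset.mul_sum]
  congr 1
  apply Finset.sum_congr rfl
  intro k hk
  have hkm : k ≠ m := Nat.ne_of_lt (Finset.mem_range.mp hk)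
  rw [Bco, if_neg hkm]
  push_cast
  ring

lemma altsum_bound (a : ℝ) (ha0 : 0 < a) (ha1 : a < 1) (m : ℕ) :
    |∑ k ∈ Finset.range m, (-1:ℝ)^k * (1 - a ^ (k+1))| ≤ 1 := by
  have hsplit : ∑ k ∈ Finset.range m, (-1:ℝ)^k * (1 - a ^ (k+1))
      = (∑ k ∈ Finset.range m, (-1:ℝ)^k) - a * ∑ k ∈ Finset.range m, (-a)^k := by
    rw [Finset.mul_sum, ← Finset.sum_sub_distrib]
    apply Finset.sum_congr rfl
    intro k _
    rw [neg_pow]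
    ring
  have hgeom : ∑ k ∈ Finset.range m, (-a)^k = ((-a)^m - 1) / (-a - 1) :=
    geom_sum_eq (by intro h; linarith) m
  have ham0 : 0 < a ^ m := pow_pos ha0 m
  have ham1 : a ^ m ≤ 1 := pow_le_one₀ ha0.le ha1.le
  have hD : 0 < a + 1 := by linarith
  have hma : a * ((1 - a^m)/(a+1)) = (a * (1 - a^m))/(a+1) := (mul_div_assoc _ _ _).symm
  have hmb : a * ((a^m + 1)/(a+1)) = (a * (a^m + 1))/(a+1) := (mul_div_assoc _ _ _).symm
  rw [hsplit, hgeom, neg_one_geom_sum]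
  rcases Nat.even_or_odd m with hme | hmo
  · rw [if_pos hme, hme.neg_pow]
    have h2 : (a ^ m - 1) / (-a - 1) = (1 - a ^ m) / (a + 1) := by
      rw [div_eq_div_iff (by intro h; linarith [neg_sub a 1] : (-a - 1) ≠ 0) hD.ne']
      ring
    rw [h2, abs_le]
    have hx1 : (a * (1 - a^m))/(a+1) ≤ 1 := (div_le_one hD).mpr (by nlinarith)
    have hx0 : 0 ≤ (a * (1 - a^m))/(a+1) := div_nonneg (by nlinarith) hD.le
    constructor <;> [linarith [hma]; linarith [hma]]
  · rw [if_neg (Nat.not_even_iff_odd.mpr hmo), hmo.neg_pow]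
    have h2 : ((-(a ^ m)) - 1) / (-a - 1) = (a ^ m + 1) / (a + 1) := by
      rw [div_eq_div_iff (by intro h; linarith [neg_sub a 1] : (-a - 1) ≠ 0) hD.ne']
      ring
    rw [h2, abs_le]
    have hx1 : (a * (a^m + 1))/(a+1) ≤ 1 := (div_le_one hD).mpr (by nlinarith)
    have hx0 : 0 ≤ (a * (a^m + 1))/(a+1) := div_nonneg (by nlinarith) hD.le
    constructor <;> [linarith [hmb]; linarith [hmb]]

lemma cos_nat_pi (k : ℕ) : Real.cos (k * π) = (-1)^k := by
  simpa using Real.cos_nat_mul_pi_sub 0 k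
lemma g_sign (c a : ℝ) (m : ℕ) (hm : 1 ≤ m) (ha0 : 0 < a) (ha1 : a < 1)
    (hc0 : 0 < c) (hc1 : c < 1) (j : ℕ) (hj : j ≤ 2*m) :
    0 < (-1:ℝ)^j * gR c a m ((2*j+1) * π / (2*m+1)) := by
  have hden : (0:ℝ) < 2*(m:ℝ)+1 := by positivity
  have hjR : (j:ℝ) ≤ 2*(m:ℝ) := by exact_mod_cast hj
  set θ : ℝ := (2*(j:ℝ)+1) * π / (2*(m:ℝ)+1) with hθdef
  have hθpos : 0 < θ := by
    apply div_pos _ hden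
    have : (0:ℝ) ≤ (j:ℝ) := Nat.cast_nonneg j
    nlinarith [pi_pos]
  have hθlt : θ < 2*π := by
    rw [hθdef, div_lt_iff₀ hden]
    nlinarith [pi_pos]
  rcases eq_or_ne j m with hjeq | hjm
  · -- θ = π
    have hθπ : θ = π := by
      rw [hθdef, hjeq]
      field_simp
    rw [hθπ, hjeq]
    have hgπ : gR c a m π
        = (∑ k ∈ Finset.range m, (c * (1 - a^(k+1))) * (-1)^k) + (-1)^m := by
      rw [gR, Finset.sum_range_succ]
      rw [Bco, if_pos rfl]
      rw [cos_nat_pi m, one_mul]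
      congr 1
      apply Finset.sum_congr rfl
      intro k hk
      have hkm : k ≠ m := Nat.ne_of_lt (Finset.mem_range.mp hk)
      rw [Bco, if_neg hkm, cos_nat_pi k]
    have hS := altsum_bound a ha0 ha1 m
    have hrw : ∑ k ∈ Finset.range m, (c * (1 - a^(k+1))) * (-1)^k
        = c * ∑ k ∈ Finset.range m, (-1:ℝ)^k * (1 - a ^ (k+1)) := by
      rw [Finset.mul_sum]; apply Finset.sum_congr rfl; intro k _; ring
    set S := ∑ k ∈ Finset.range m, (-1:ℝ)^k * (1 - a ^ (k+1)) with hSdef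
    have habs : |(-1:ℝ)^m * (c * S)| ≤ c := by
      rw [abs_mul, abs_mul, abs_pow, abs_neg, abs_one, one_pow, one_mul,
        abs_of_pos hc0]
      calc c * |S| ≤ c * 1 := by apply mul_le_mul_of_nonneg_left hS hc0.le
        _ = c := mul_one c
    have h1 : (-1:ℝ)^m * gR c a m π = 1 + (-1)^m * (c * S) := by
      rw [hgπ, hrw]
      rcases Nat.even_or_odd m with h | h
      · rw [h.neg_one_pow]; ring
      · rw [h.neg_one_pow]; ring
    rw [h1]
    have := abs_le.mp habs
    linarith
  · -- j ≠ m
    set B := Bco c a m with hB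
    set s : ℕ → ℝ := fun k => Real.sin (((k:ℝ) - 1/2) * θ) with hs
    have hterm : ∀ k : ℕ, 2 * Real.sin (θ/2) * Real.cos ((k:ℝ)*θ) = s (k+1) - s k := by
      intro k
      simp only [hs]
      push_cast
      have e1 : ((k:ℝ)+1-1/2)*θ = (k:ℝ)*θ + θ/2 := by ring
      have e2 : ((k:ℝ)-1/2)*θ = (k:ℝ)*θ - θ/2 := by ring
      rw [e1, e2, Real.sin_add, Real.sin_sub]
      ring
    have hkey : 2 * Real.sin (θ/2) * gR c a m θ
        = B m * s (m+1) - B 0 * s 0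
          - ∑ k ∈ Finset.range m, (B (k+1) - B k) * s (k+1) := by
      rw [gR, Finset.mul_sum, ← tele_sum B s m]
      apply Finset.sum_congr rfl
      intro k _
      rw [← hterm k]
      ring
    have hs0 : s 0 = -Real.sin (θ/2) := by
      simp only [hs]
      rw [show (((0:ℕ):ℝ) - 1/2) * θ = -(θ/2) by push_cast; ring, Real.sin_neg]
    have hsm : s (m+1) = (-1:ℝ)^j := by
      simp only [hs]
      have e : (((m:ℕ)+1:ℝ) - 1/2) * θ = (j:ℝ)*π + π/2 := by
        rw [hθdef]
        field_simp
        ring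
      push_cast
      push_cast at e
      rw [e, Real.sin_add, Real.sin_pi_div_two, Real.cos_pi_div_two,
        Real.sin_nat_mul_pi, cos_nat_pi]
      ring
    have hBm : B m = 1 := by rw [hB, Bco, if_pos rfl]
    have hB0 : B 0 = c * (1 - a) := by
      rw [hB, Bco, if_neg (by omega : (0:ℕ) ≠ m)]
      norm_num
    have hB0pos : 0 < B 0 := by rw [hB0]; nlinarith
    have hBd : ∀ k ∈ Finset.range m, 0 ≤ B (k+1) - B k := by
      intro k hk
      have hkm : k < m := Finset.mem_range.mp hk
      have hkm' : k ≠ m := Nat.ne_of_lt hkm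
      have hpow1 : 0 < a ^ (k+1) := pow_pos ha0 (k+1)
      have hpow1' : a ^ (k+1) ≤ 1 := pow_le_one₀ ha0.le ha1.le
      by_cases h : k + 1 = m
      · rw [hB, Bco, Bco, if_pos h, if_neg hkm']
        nlinarith
      · rw [hB, Bco, Bco, if_neg h, if_neg hkm']
        have : a ^ (k+2) = a^(k+1) * a := by rw [pow_succ]
        nlinarith
    have htel : ∑ k ∈ Finset.range m, (B (k+1) - B k) = 1 - B 0 := by
      rw [Finset.sum_range_sub (f := B), hBm]
    have hsum_le : |∑ k ∈ Finset.range m, (B (k+1) - B k) * s (k+1)| ≤ 1 - B 0 := by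
      calc |∑ k ∈ Finset.range m, (B (k+1) - B k) * s (k+1)|
          ≤ ∑ k ∈ Finset.range m, |(B (k+1) - B k) * s (k+1)| :=
            Finset.abs_sum_le_sum_abs _ _
        _ ≤ ∑ k ∈ Finset.range m, (B (k+1) - B k) := by
            apply Finset.sum_le_sum
            intro k hk
            rw [abs_mul, abs_of_nonneg (hBd k hk)]
            have hsle : |s (k+1)| ≤ 1 :=
              abs_le.mpr ⟨Real.neg_one_le_sin _, Real.sin_le_one _⟩
            nlinarith [hBd k hk, abs_nonneg (s (k+1))]
        _ = 1 - B 0 := htel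
    have hsin2pos : 0 < Real.sin (θ/2) :=
      Real.sin_pos_of_pos_of_lt_pi (by linarith) (by linarith)
    have hsin2lt : Real.sin (θ/2) < 1 := by
      rcases lt_or_eq_of_le (Real.sin_le_one (θ/2)) with h | h
      · exact h
      · exfalso
        rcases Real.sin_eq_one_iff.mp h with ⟨k, hk⟩
        have hπ := pi_pos
        have hk0 : k = 0 := by
          have h1 : (k:ℝ) * (2*π) < π/2 := by linarith
          have h2 : -(π/2) < (k:ℝ) * (2*π) := by linarith
          have hk1 : (k:ℝ) < 1 := by
            have hlt : (k:ℝ)*(2*π) < 1*(2*π) := by linarith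
            exact lt_of_mul_lt_mul_right hlt (by positivity)
          have hk2 : (-1:ℝ) < (k:ℝ) := by
            have hlt : (-1:ℝ)*(2*π) < (k:ℝ)*(2*π) := by linarith
            exact lt_of_mul_lt_mul_right hlt (by positivity)
          have : (k:ℤ) < 1 := by exact_mod_cast hk1
          have : (-1:ℤ) < k := by exact_mod_cast hk2
          omega
        rw [hk0] at hk
        push_cast at hk
        have hθπ : θ = π := by linarith
        rw [hθdef, div_eq_iff hden.ne'] at hθπ
        have h5 : (2*(j:ℝ)+1) * π = (2*(m:ℝ)+1) * π := by linarith [hθπ]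
        have h6 : (2*(j:ℝ)+1) = (2*(m:ℝ)+1) := mul_right_cancel₀ pi_ne_zero h5
        have : j = m := by
          have : (j:ℝ) = (m:ℝ) := by linarith
          exact_mod_cast this
        exact hjm this
    -- final assembly
    have e : 2 * Real.sin (θ/2) * gR c a m θ
        = (-1:ℝ)^j + B 0 * Real.sin (θ/2)
          - ∑ k ∈ Finset.range m, (B (k+1) - B k) * s (k+1) := by
      rw [hkey, hBm, hs0, hsm]
      ring
    have habs := abs_le.mp hsum_le
    have hpos : 0 < (-1:ℝ)^j * (2 * Real.sin (θ/2) * gR c a m θ) := by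
      have hq : 0 < B 0 * (1 - Real.sin (θ/2)) :=
        mul_pos hB0pos (by linarith)
      have hq2 : B 0 * Real.sin (θ/2) = B 0 - B 0 * (1 - Real.sin (θ/2)) := by ring
      rcases Nat.even_or_odd j with h | h
      · rw [h.neg_one_pow] at e ⊢
        rw [one_mul, e]
        linarith [habs.1, habs.2, mul_pos hB0pos hsin2pos]
      · rw [h.neg_one_pow] at e ⊢
        rw [e]
        linarith [habs.1, habs.2]
    have h2s : (0:ℝ) < 2 * Real.sin (θ/2) := by linarith
    have hre : (-1:ℝ)^j * (2 * Real.sin (θ/2) * gR c a m θ)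
        = (2 * Real.sin (θ/2)) * ((-1:ℝ)^j * gR c a m θ) := by ring
    rw [hre] at hpos
    exact (mul_pos_iff_of_pos_left h2s).mp hpos

/-- **Theorem 2(C) of the paper (trigonometric core).** For `m ≥ 1` and `0 < a < 1` with
`m − ∑_{k=1}^{m} a^k > β`, setting `c = β/(m − ∑_{k=1}^{m} a^k)` one has `0 < c < 1`, and
the entire function `F(z) = cos(mz) + c ∑_{k=0}^{m−1} (1 − a^{k+1}) cos(kz)` has only
real zeros. -/
theorem PhiS2_core_real_zeros (m : ℕ) (hm : 1 ≤ m) (a : ℝ) (ha0 : 0 < a) (ha1 : a < 1)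
    (hma : betaConst < (m : ℝ) - ∑ k ∈ Finset.Icc 1 m, a ^ k) :
    (0 < betaConst / ((m : ℝ) - ∑ k ∈ Finset.Icc 1 m, a ^ k) ∧
      betaConst / ((m : ℝ) - ∑ k ∈ Finset.Icc 1 m, a ^ k) < 1) ∧
    ∀ z : ℂ,
      Complex.cos (m * z) +
          (betaConst / ((m : ℝ) - ∑ k ∈ Finset.Icc 1 m, a ^ k) : ℝ) *
            ∑ k ∈ Finset.range m, ((1 - a ^ (k + 1) : ℝ) : ℂ) * Complex.cos (k * z) = 0 →
      z.im = 0 := by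
  have hd : 0 < (m : ℝ) - ∑ k ∈ Finset.Icc 1 m, a ^ k := lt_trans betaConst_pos hma
  set c : ℝ := betaConst / ((m : ℝ) - ∑ k ∈ Finset.Icc 1 m, a ^ k) with hc
  have hc0 : 0 < c := div_pos betaConst_pos hd
  have hc1 : c < 1 := (div_lt_one hd).mpr hma
  refine ⟨⟨hc0, hc1⟩, ?_⟩
  intro z hz
  by_contra him
  -- sample points
  set x : ℕ → ℝ := fun j => (2*(j:ℝ)+1) * π / (2*(m:ℝ)+1) with hx
  have hden : (0:ℝ) < 2*(m:ℝ)+1 := by positivity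
  have hxpos : ∀ j : ℕ, 0 < x j := by
    intro j
    apply div_pos _ hden
    have : (0:ℝ) ≤ (j:ℝ) := Nat.cast_nonneg j
    nlinarith [pi_pos]
  have hxmono : ∀ i j : ℕ, i < j → x i < x j := by
    intro i j hij
    have hij' : (i:ℝ) < (j:ℝ) := by exact_mod_cast hij
    rw [hx]
    simp only
    apply div_lt_div_of_pos_right ?_ hden
    nlinarith [pi_pos]
  have hx2m : x (2*m) < 2*π := by
    rw [hx]
    simp only
    rw [div_lt_iff₀ hden]
    push_cast
    nlinarith [pi_pos]
  -- continuity
  have hcont : Continuous (gR c a m) := by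
    apply continuous_finset_sum
    intro i _
    exact continuous_const.mul (Real.continuous_cos.comp (continuous_const.mul continuous_id))
  -- roots between consecutive sample points
  have hroots : ∀ j : ℕ, ∃ t : ℝ, j < 2*m → ((x j < t ∧ t < x (j+1)) ∧ gR c a m t = 0) := by
    intro j
    by_cases hj : j < 2*m
    · have hs1 := g_sign c a m hm ha0 ha1 hc0 hc1 j (le_of_lt hj)
      have hs2 := g_sign c a m hm ha0 ha1 hc0 hc1 (j+1) (by omega)
      have hab : x j ≤ x (j+1) := (hxmono j (j+1) (by omega)).le
      have hcont' : ContinuousOn (gR c a m) (Set.Icc (x j) (x (j+1))) :=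
        hcont.continuousOn
      rcases Nat.even_or_odd j with he | ho
      · rw [he.neg_one_pow, one_mul] at hs1
        rw [(he.add_one).neg_one_pow] at hs2
        have hs2' : gR c a m (x (j+1)) < 0 := by linarith
        have hmem : (0:ℝ) ∈ Set.Ioo (gR c a m (x (j+1))) (gR c a m (x j)) := ⟨hs2', hs1⟩
        obtain ⟨t, ht, htv⟩ := intermediate_value_Ioo' hab hcont' hmem
        exact ⟨t, fun _ => ⟨⟨ht.1, ht.2⟩, htv⟩⟩
      · rw [ho.neg_one_pow] at hs1
        have hs1' : gR c a m (x j) < 0 := by linarith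
        rw [(ho.add_one).neg_one_pow, one_mul] at hs2
        have hmem : (0:ℝ) ∈ Set.Ioo (gR c a m (x j)) (gR c a m (x (j+1))) := ⟨hs1', hs2⟩
        obtain ⟨t, ht, htv⟩ := intermediate_value_Ioo hab hcont' hmem
        exact ⟨t, fun _ => ⟨⟨ht.1, ht.2⟩, htv⟩⟩
    · exact ⟨0, fun h => absurd h hj⟩
  choose T hT using hroots
  -- basic facts about T
  have hT1 : ∀ j, j < 2*m → x j < T j := fun j hj => ((hT j hj).1).1
  have hT2 : ∀ j, j < 2*m → T j < x (j+1) := fun j hj => ((hT j hj).1).2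
  have hT0 : ∀ j, j < 2*m → 0 < T j := fun j hj => lt_trans (hxpos j) (hT1 j hj)
  have hT2π : ∀ j, j < 2*m → T j < 2*π := by
    intro j hj
    have h1 : T j < x (j+1) := hT2 j hj
    rcases eq_or_lt_of_le (Nat.succ_le_of_lt hj) with h | h
    · have : x (j+1) = x (2*m) := by rw [show j+1 = 2*m from h]
      linarith [hx2m]
    · have := hxmono (j+1) (2*m) h
      linarith [hx2m]
  have hTmono : ∀ i j, i < j → j < 2*m → T i < T j := by
    intro i j hij hj
    have h1 : T i < x (i+1) := hT2 i (by omega)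
    have h2 : x j < T j := hT1 j hj
    rcases eq_or_lt_of_le (Nat.succ_le_of_lt hij) with h | h
    · have : x (i+1) = x j := by rw [show i+1 = j from h]
      linarith
    · have := hxmono (i+1) j h
      linarith
  -- polynomial roots
  have hQne : Qp c a m ≠ 0 := Qp_ne_zero c a m hm
  have hQdeg : (Qp c a m).natDegree = 2*m := Qp_natDegree c a m hm
  set w0 : ℂ := Complex.exp (z * Complex.I) with hw0
  have hQ0 : (Qp c a m).eval w0 = 0 := by
    rw [hw0, Qp_eval, hz, mul_zero]
  have hQt : ∀ j, j < 2*m → (Qp c a m).eval (Complex.exp ((T j : ℂ) * Complex.I)) = 0 := by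
    intro j hj
    rw [Qp_eval, ← gR_cast c a m hm (T j), (hT j hj).2, Complex.ofReal_zero, mul_zero]
  -- distinctness
  have habsT : ∀ j, ‖Complex.exp ((T j : ℂ) * Complex.I)‖ = 1 := by
    intro j
    exact Complex.norm_exp_ofReal_mul_I (T j)
  have habs0 : ‖w0‖ ≠ 1 := by
    rw [hw0, Complex.norm_exp]
    have : (z * Complex.I).re = -z.im := by simp [Complex.mul_I_re]
    rw [this]
    intro h
    rw [Real.exp_eq_one_iff] at h
    apply him
    linarith
  have hexp_ne : ∀ t₁ t₂ : ℝ, 0 < t₁ → t₁ < t₂ → t₂ < 2*π →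
      Complex.exp ((t₁:ℂ) * Complex.I) ≠ Complex.exp ((t₂:ℂ) * Complex.I) := by
    intro t₁ t₂ h0 h12 h2π heq
    rw [Complex.exp_eq_exp_iff_exists_int] at heq
    obtain ⟨n, hn⟩ := heq
    have hn' : (t₁:ℂ) * Complex.I = ((t₂:ℝ) + (n:ℝ)*(2*π) : ℝ) * Complex.I := by
      rw [hn]
      push_cast
      ring
    have hre : (t₁:ℝ) = t₂ + n*(2*π) := by
      have := mul_right_cancel₀ Complex.I_ne_zero hn'
      exact_mod_cast this
    have hπ := pi_pos
    have hb1 : (n:ℝ)*(2*π) < 0 := by linarith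
    have hb2 : -(2*π) < (n:ℝ)*(2*π) := by linarith
    have hn1 : (n:ℝ) < 0 := by
      by_contra hcon
      push_neg at hcon
      nlinarith
    have hn2 : (-1:ℝ) < (n:ℝ) := by
      by_contra hcon
      push_neg at hcon
      nlinarith
    have h1 : (n:ℤ) < 0 := by exact_mod_cast hn1
    have h2 : (-1:ℤ) < n := by exact_mod_cast hn2
    omega
  -- the finset of roots
  set W : ℕ → ℂ := fun j => Complex.exp ((T j : ℂ) * Complex.I) with hW
  set Sfin : Finset ℂ := insert w0 ((Finset.range (2*m)).image W) with hSfin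
  have hinj : Set.InjOn W ↑(Finset.range (2*m)) := by
    intro i hi j hj hij
    simp only [Finset.coe_range, Set.mem_Iio] at hi hj
    by_contra hne
    rcases Nat.lt_or_ge i j with h | h
    · exact hexp_ne (T i) (T j) (hT0 i hi) (hTmono i j h hj) (hT2π j hj) hij
    · have h' : j < i := by omega
      exact hexp_ne (T j) (T i) (hT0 j hj) (hTmono j i h' hi) (hT2π i hi) hij.symm
  have hw0notmem : w0 ∉ (Finset.range (2*m)).image W := by
    intro hmem
    obtain ⟨j, hj, hjeq⟩ := Finset.mem_image.mp hmem
    apply habs0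
    rw [← hjeq]
    exact habsT j
  have hcard : Sfin.card = 2*m + 1 := by
    rw [hSfin, Finset.card_insert_of_notMem hw0notmem,
      Finset.card_image_of_injOn hinj, Finset.card_range]
  have hsub : Sfin ⊆ (Qp c a m).roots.toFinset := by
    intro w hw
    rw [Multiset.mem_toFinset, Polynomial.mem_roots hQne]
    rcases Finset.mem_insert.mp hw with h | h
    · rw [h]; exact hQ0
    · obtain ⟨j, hj, hjeq⟩ := Finset.mem_image.mp h
      rw [← hjeq]
      exact hQt j (Finset.mem_range.mp hj)
  have hle : Sfin.card ≤ 2*m := by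
    calc Sfin.card ≤ (Qp c a m).roots.toFinset.card := Finset.card_le_card hsub
      _ ≤ Multiset.card (Qp c a m).roots := Multiset.toFinset_card_le _
      _ ≤ (Qp c a m).natDegree := Polynomial.card_roots' _
      _ = 2*m := hQdeg
  omega
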